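/- Suppose Y and X are conditionally independent given BᵀX. Then for each fixed 0 < τ < 1 the conditional expectile f_τ(X) is almost surely equal to a Borel-measurable function of BᵀX: there exists Borel g : ℝ^d → ℝ with f_τ(X) = g(BᵀX) a.s., where g(w) is the unique minimizer over a ∈ ℝ of ∫ φ_τ(y − a) κ_B(w)(dy) and κ_B is a regular conditional distribution of Y given BᵀX. -/

import Mathlib

open MeasureTheory ProbabilityTheory Matrix

/-- The asymmetric squared-error loss `φ_τ`. -/
noncomputable def phiLoss (τ c : ℝ) : ℝ := if c ≤ 0 then (1 - τ) * c ^ 2 else τ * c ^ 2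

/-- `a` is the `τ`-th expectile of the measure `ν`: it is the unique minimizer of the
asymmetric squared-error risk `b ↦ ∫ φ_τ(y - b) ν(dy)`. -/
def IsExpectile (τ : ℝ) (ν : MeasureTheory.Measure ℝ) (a : ℝ) : Prop :=
  ∀ b : ℝ, b ≠ a → ∫ y, phiLoss τ (y - a) ∂ν < ∫ y, phiLoss τ (y - b) ∂ν

open scoped ENNReal

noncomputable def psiW (τ c : ℝ) : ℝ := if c ≤ 0 then (1 - τ) * c else τ * c

lemma measurable_phiLoss (τ : ℝ) : Measurable (phiLoss τ) := by
  unfold phiLoss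
  exact Measurable.ite measurableSet_Iic (by fun_prop) (by fun_prop)

lemma measurable_psiW (τ : ℝ) : Measurable (psiW τ) := by
  unfold psiW
  exact Measurable.ite measurableSet_Iic (by fun_prop) (by fun_prop)

lemma phiLoss_nonneg {τ : ℝ} (hτ0 : 0 < τ) (hτ1 : τ < 1) (c : ℝ) : 0 ≤ phiLoss τ c := by
  unfold phiLoss; split <;> nlinarith [sq_nonneg c]

lemma phiLoss_le_sq {τ : ℝ} (hτ0 : 0 < τ) (hτ1 : τ < 1) (c : ℝ) : phiLoss τ c ≤ c ^ 2 := by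
  unfold phiLoss; split <;> nlinarith [sq_nonneg c]

lemma min_sq_le_phiLoss {τ : ℝ} (hτ0 : 0 < τ) (hτ1 : τ < 1) (c : ℝ) :
    min τ (1 - τ) * c ^ 2 ≤ phiLoss τ c := by
  unfold phiLoss
  rcases le_total τ (1 - τ) with h | h <;> split <;>
    simp [min_eq_left, min_eq_right, h] <;> nlinarith [sq_nonneg c]

lemma abs_psiW_le {τ : ℝ} (hτ0 : 0 < τ) (hτ1 : τ < 1) (c : ℝ) : |psiW τ c| ≤ |c| := by
  unfold psiW
  split <;> rw [abs_mul] <;>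
  · apply mul_le_of_le_one_left (abs_nonneg _)
    rw [abs_le] <;> constructor <;> linarith





lemma ptw_upper {τ : ℝ} (hτ0 : 0 < τ) (hτ1 : τ < 1) (c h : ℝ) :
    phiLoss τ (c + h) ≤ phiLoss τ c + (2 * h) * psiW τ c + max τ (1 - τ) * h ^ 2 := by
  unfold phiLoss psiW
  rcases le_total τ (1 - τ) with hm | hm <;>
    [rw [max_eq_right hm]; rw [max_eq_left hm]] <;>
    split_ifs <;>
    first
    | nlinarith [sq_nonneg h, sq_nonneg (c + h), sq_nonneg c]
    | (have hk : (c + h) ^ 2 ≤ h ^ 2 := by nlinarith [sq_nonneg c]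
       first
       | nlinarith [mul_nonneg (by linarith : (0:ℝ) ≤ 1 - 2*τ) (sub_nonneg.2 hk),
           sq_nonneg h, sq_nonneg (c + h)]
       | nlinarith [mul_nonneg (by linarith : (0:ℝ) ≤ 2*τ - 1) (sub_nonneg.2 hk),
           sq_nonneg h, sq_nonneg (c + h)])

lemma ptw_lower {τ : ℝ} (hτ0 : 0 < τ) (hτ1 : τ < 1) (c h : ℝ) :
    phiLoss τ c + (2 * h) * psiW τ c + min τ (1 - τ) * h ^ 2 ≤ phiLoss τ (c + h) := by
  unfold phiLoss psiW
  rcases le_total τ (1 - τ) with hm | hm <;>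
    [rw [min_eq_left hm]; rw [min_eq_right hm]] <;>
    split_ifs <;>
    first
    | nlinarith [sq_nonneg h, sq_nonneg (c + h), sq_nonneg c]
    | (have hk : (c + h) ^ 2 ≤ h ^ 2 := by nlinarith [sq_nonneg c]
       first
       | nlinarith [mul_nonneg (by linarith : (0:ℝ) ≤ 1 - 2*τ) (sub_nonneg.2 hk),
           sq_nonneg h, sq_nonneg (c + h)]
       | nlinarith [mul_nonneg (by linarith : (0:ℝ) ≤ 2*τ - 1) (sub_nonneg.2 hk),
           sq_nonneg h, sq_nonneg (c + h)])

lemma ptw_psi_mono {τ : ℝ} (hτ0 : 0 < τ) (hτ1 : τ < 1) (c h : ℝ) (hh : 0 ≤ h) :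
    psiW τ c + min τ (1 - τ) * h ≤ psiW τ (c + h) := by
  unfold psiW
  rcases le_total τ (1 - τ) with hm | hm <;>
    [rw [min_eq_left hm]; rw [min_eq_right hm]] <;>
    split_ifs <;> nlinarith

section ExpectileCore

variable {τ : ℝ} {ν : MeasureTheory.Measure ℝ} [IsProbabilityMeasure ν]

lemma integrable_id_of_sq (hsq : Integrable (fun y => y ^ 2) ν) :
    Integrable (fun y : ℝ => y) ν := by
  refine (hsq.add (integrable_const 1)).mono aestronglyMeasurable_id
    (ae_of_all _ fun y => ?_)
  simp only [Real.norm_eq_abs, Pi.add_apply]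
  have h1 : |y| ≤ y ^ 2 + 1 := by nlinarith [sq_abs y, sq_nonneg (|y| - 1)]
  have h2 : (0:ℝ) ≤ y ^ 2 + 1 := by positivity
  rw [abs_of_nonneg h2]; exact h1

lemma integrable_sq_shift (hsq : Integrable (fun y => y ^ 2) ν) (b : ℝ) :
    Integrable (fun y : ℝ => (y - b) ^ 2) ν := by
  have h : (fun y : ℝ => (y - b) ^ 2) = fun y => y ^ 2 + (-2 * b) * y + b ^ 2 := by
    funext y; ring
  rw [h]
  exact (hsq.add ((integrable_id_of_sq hsq).const_mul _)).add (integrable_const _)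

lemma integrable_phiLoss_shift (hτ0 : 0 < τ) (hτ1 : τ < 1)
    (hsq : Integrable (fun y => y ^ 2) ν) (b : ℝ) :
    Integrable (fun y : ℝ => phiLoss τ (y - b)) ν := by
  refine (integrable_sq_shift hsq b).mono
    (((measurable_phiLoss τ).comp (measurable_id.sub_const b)).aestronglyMeasurable)
    (ae_of_all _ fun y => ?_)
  simp only [Real.norm_eq_abs]
  rw [abs_of_nonneg (phiLoss_nonneg hτ0 hτ1 _), abs_of_nonneg (sq_nonneg _)]
  exact phiLoss_le_sq hτ0 hτ1 _

lemma integrable_psiW_shift (hτ0 : 0 < τ) (hτ1 : τ < 1)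
    (hsq : Integrable (fun y => y ^ 2) ν) (b : ℝ) :
    Integrable (fun y : ℝ => psiW τ (y - b)) ν := by
  refine ((integrable_id_of_sq hsq).sub (integrable_const b)).mono
    (((measurable_psiW τ).comp (measurable_id.sub_const b)).aestronglyMeasurable)
    (ae_of_all _ fun y => ?_)
  simp only [Real.norm_eq_abs]
  simp only [Real.norm_eq_abs, Pi.sub_apply]
  exact abs_psiW_le hτ0 hτ1 _

end ExpectileCore

section ExpectileCore2

variable {τ : ℝ} {ν : MeasureTheory.Measure ℝ} [IsProbabilityMeasure ν]

lemma integral_phi_upper (hτ0 : 0 < τ) (hτ1 : τ < 1)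
    (hsq : Integrable (fun y => y ^ 2) ν) (a h : ℝ) :
    ∫ y, phiLoss τ (y - (a - h)) ∂ν ≤
      ∫ y, phiLoss τ (y - a) ∂ν + (2 * h) * ∫ y, psiW τ (y - a) ∂ν
        + max τ (1 - τ) * h ^ 2 := by
  have hint1 := integrable_phiLoss_shift hτ0 hτ1 hsq a
  have hint2 := (integrable_psiW_shift hτ0 hτ1 hsq a).const_mul (2 * h)
  have step : ∫ y, phiLoss τ (y - (a - h)) ∂ν ≤
      ∫ y, (phiLoss τ (y - a) + (2 * h) * psiW τ (y - a) + max τ (1 - τ) * h ^ 2) ∂ν := by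
    refine integral_mono (integrable_phiLoss_shift hτ0 hτ1 hsq _)
      ((hint1.add hint2).add (integrable_const _)) (fun y => ?_)
    have := ptw_upper hτ0 hτ1 (y - a) h
    have he : y - (a - h) = y - a + h := by ring
    rw [he]; exact this
  refine step.trans (le_of_eq ?_)
  have hint12 : Integrable (fun y => phiLoss τ (y - a) + (2 * h) * psiW τ (y - a)) ν :=
    hint1.add hint2
  rw [integral_add hint12 (integrable_const _), integral_add hint1 hint2,
    integral_const_mul, integral_const, probReal_univ, one_smul]

lemma integral_phi_lower (hτ0 : 0 < τ) (hτ1 : τ < 1)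
    (hsq : Integrable (fun y => y ^ 2) ν) (a h : ℝ) :
    ∫ y, phiLoss τ (y - a) ∂ν + (2 * h) * ∫ y, psiW τ (y - a) ∂ν
        + min τ (1 - τ) * h ^ 2 ≤ ∫ y, phiLoss τ (y - (a - h)) ∂ν := by
  have hint1 := integrable_phiLoss_shift hτ0 hτ1 hsq a
  have hint2 := (integrable_psiW_shift hτ0 hτ1 hsq a).const_mul (2 * h)
  have step : ∫ y, (phiLoss τ (y - a) + (2 * h) * psiW τ (y - a) + min τ (1 - τ) * h ^ 2) ∂ν ≤
      ∫ y, phiLoss τ (y - (a - h)) ∂ν := by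
    refine integral_mono ((hint1.add hint2).add (integrable_const _))
      (integrable_phiLoss_shift hτ0 hτ1 hsq _) (fun y => ?_)
    have := ptw_lower hτ0 hτ1 (y - a) h
    have he : y - (a - h) = y - a + h := by ring
    rw [he]; exact this
  refine le_trans (le_of_eq ?_) step
  have hint12 : Integrable (fun y => phiLoss τ (y - a) + (2 * h) * psiW τ (y - a)) ν :=
    hint1.add hint2
  rw [integral_add hint12 (integrable_const _), integral_add hint1 hint2,
    integral_const_mul, integral_const, probReal_univ, one_smul]

lemma integral_psi_antitone (hτ0 : 0 < τ) (hτ1 : τ < 1)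
    (hsq : Integrable (fun y => y ^ 2) ν) {a b : ℝ} (hab : a ≤ b) :
    ∫ y, psiW τ (y - b) ∂ν + min τ (1 - τ) * (b - a) ≤ ∫ y, psiW τ (y - a) ∂ν := by
  have hint1 := integrable_psiW_shift hτ0 hτ1 hsq b
  have step : ∫ y, (psiW τ (y - b) + min τ (1 - τ) * (b - a)) ∂ν ≤
      ∫ y, psiW τ (y - a) ∂ν := by
    refine integral_mono (hint1.add (integrable_const _))
      (integrable_psiW_shift hτ0 hτ1 hsq _) (fun y => ?_)
    have := ptw_psi_mono hτ0 hτ1 (y - b) (b - a) (by linarith)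
    have he : y - b + (b - a) = y - a := by ring
    rw [he] at this; exact this
  refine le_trans (le_of_eq ?_) step
  rw [integral_add hint1 (integrable_const _), integral_const, probReal_univ,
    one_smul]

lemma sq_integrable_of_isExpectile (hτ0 : 0 < τ) (hτ1 : τ < 1) {a : ℝ}
    (hE : IsExpectile τ ν a) : Integrable (fun y => y ^ 2) ν := by
  by_contra hni
  have hm0 : 0 < min τ (1 - τ) := lt_min hτ0 (by linarith)
  have key : ∀ b : ℝ, Integrable (fun y => phiLoss τ (y - b)) ν →
      Integrable (fun y => y ^ 2) ν := by
    intro b hi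
    have h2 : Integrable (fun y : ℝ => (y - b) ^ 2) ν := by
      refine (hi.const_mul (min τ (1 - τ))⁻¹).mono
        (((measurable_id.sub_const b).pow_const 2).aestronglyMeasurable)
        (ae_of_all _ fun y => ?_)
      simp only [Real.norm_eq_abs]
      rw [abs_of_nonneg (sq_nonneg _),
        abs_of_nonneg (mul_nonneg (inv_nonneg.2 hm0.le) (phiLoss_nonneg hτ0 hτ1 _))]
      rw [← div_eq_inv_mul, le_div_iff₀ hm0, mul_comm]
      exact min_sq_le_phiLoss hτ0 hτ1 _
    refine ((h2.const_mul 2).add (integrable_const (2 * b ^ 2))).mono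
      ((measurable_id.pow_const 2).aestronglyMeasurable) (ae_of_all _ fun y => ?_)
    simp only [Real.norm_eq_abs]
    rw [abs_of_nonneg (sq_nonneg _)]
    have : y ^ 2 ≤ 2 * (y - b) ^ 2 + 2 * b ^ 2 := by nlinarith [sq_nonneg (y - 2 * b)]
    exact this.trans (le_abs_self _)
  have hz1 : ∫ y, phiLoss τ (y - a) ∂ν = 0 := integral_undef (fun h => hni (key a h))
  have hz2 : ∫ y, phiLoss τ (y - (a + 1)) ∂ν = 0 := integral_undef (fun h => hni (key (a + 1) h))
  have hEa := hE (a + 1) (by norm_num)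
  rw [hz1, hz2] at hEa
  exact lt_irrefl 0 hEa

lemma foc_of_isExpectile (hτ0 : 0 < τ) (hτ1 : τ < 1)
    (hsq : Integrable (fun y => y ^ 2) ν) {a : ℝ} (hE : IsExpectile τ ν a) :
    ∫ y, psiW τ (y - a) ∂ν = 0 := by
  by_contra hG
  set M := max τ (1 - τ) with hM
  have hM0 : 0 < M := lt_of_lt_of_le hτ0 (le_max_left _ _)
  set G := ∫ y, psiW τ (y - a) ∂ν with hGdef
  have hG2 : 0 < G ^ 2 := lt_of_le_of_ne (sq_nonneg G) (Ne.symm (pow_ne_zero 2 hG))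
  have hb : a - (-(G / M)) ≠ a := by
    simp only [sub_neg_eq_add, ne_eq, add_eq_left]
    exact div_ne_zero hG hM0.ne'
  have hub := integral_phi_upper hτ0 hτ1 hsq a (-(G / M))
  have hlt := hE (a - (-(G / M))) hb
  have hcalc : (2 * (-(G / M))) * G + M * (-(G / M)) ^ 2 = -(G ^ 2 / M) := by
    field_simp; ring
  have hpos : 0 < G ^ 2 / M := div_pos hG2 hM0
  rw [← hGdef] at hub
  linarith [hub, hlt, hcalc]

lemma isExpectile_of_foc (hτ0 : 0 < τ) (hτ1 : τ < 1)
    (hsq : Integrable (fun y => y ^ 2) ν) {a : ℝ}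
    (hG : ∫ y, psiW τ (y - a) ∂ν = 0) : IsExpectile τ ν a := by
  intro b hb
  have hm0 : 0 < min τ (1 - τ) := lt_min hτ0 (by linarith)
  have hlb := integral_phi_lower hτ0 hτ1 hsq a (a - b)
  rw [show a - (a - b) = b from by ring, hG] at hlb
  have hab : 0 < (a - b) ^ 2 :=
    lt_of_le_of_ne (sq_nonneg _) (Ne.symm (pow_ne_zero 2 (sub_ne_zero.2 (Ne.symm hb))))
  nlinarith [mul_pos hm0 hab]

end ExpectileCore2

section ExpectileSup

variable {τ : ℝ} {ν : MeasureTheory.Measure ℝ} [IsProbabilityMeasure ν]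

lemma expSet_nonempty (hτ0 : 0 < τ) (hτ1 : τ < 1)
    (hsq : Integrable (fun y => y ^ 2) ν) :
    {b : ℝ | 0 ≤ ∫ y, psiW τ (y - b) ∂ν}.Nonempty := by
  have hm0 : 0 < min τ (1 - τ) := lt_min hτ0 (by linarith)
  set m := min τ (1 - τ)
  set G0 := ∫ y, psiW τ (y - 0) ∂ν with hG0
  refine ⟨-(|G0| / m + 1), ?_⟩
  have hb : -(|G0| / m + 1) ≤ 0 := by
    have : 0 ≤ |G0| / m + 1 := by positivity
    linarith
  have := integral_psi_antitone hτ0 hτ1 hsq hb (b := 0)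
  rw [← hG0] at this
  have hexp : m * (0 - -(|G0| / m + 1)) = |G0| + m := by field_simp; ring
  have habs : -|G0| ≤ G0 := neg_abs_le G0
  simp only [Set.mem_setOf_eq]
  linarith [this, hexp ▸ this]

lemma expSet_bddAbove (hτ0 : 0 < τ) (hτ1 : τ < 1)
    (hsq : Integrable (fun y => y ^ 2) ν) :
    BddAbove {b : ℝ | 0 ≤ ∫ y, psiW τ (y - b) ∂ν} := by
  have hm0 : 0 < min τ (1 - τ) := lt_min hτ0 (by linarith)
  set m := min τ (1 - τ)
  set G0 := ∫ y, psiW τ (y - 0) ∂ν with hG0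
  refine ⟨|G0| / m, fun b hb => ?_⟩
  simp only [Set.mem_setOf_eq] at hb
  by_contra hbt
  push_neg at hbt
  have hb0 : (0:ℝ) ≤ b := le_trans (by positivity) hbt.le
  have := integral_psi_antitone hτ0 hτ1 hsq hb0 (b := b)
  rw [← hG0] at this
  have h1 : |G0| < m * b := by
    rw [div_lt_iff₀ hm0] at hbt; linarith [hbt]
  have habs : G0 ≤ |G0| := le_abs_self G0
  linarith [this]

lemma sSup_char (hτ0 : 0 < τ) (hτ1 : τ < 1)
    (hsq : Integrable (fun y => y ^ 2) ν) (t : ℝ) :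
    sSup {b : ℝ | 0 ≤ ∫ y, psiW τ (y - b) ∂ν} ≤ t ↔
      ∀ q : ℚ, t < (q : ℝ) → ∫ y, psiW τ (y - (q : ℝ)) ∂ν < 0 := by
  have hm0 : 0 < min τ (1 - τ) := lt_min hτ0 (by linarith)
  constructor
  · intro H q hq
    by_contra h
    push_neg at h
    have hmem : (q : ℝ) ∈ {b : ℝ | 0 ≤ ∫ y, psiW τ (y - b) ∂ν} := h
    have := le_csSup (expSet_bddAbove hτ0 hτ1 hsq) hmem
    linarith
  · intro H
    refine csSup_le (expSet_nonempty hτ0 hτ1 hsq) (fun b hb => ?_)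
    simp only [Set.mem_setOf_eq] at hb
    by_contra hbt
    push_neg at hbt
    obtain ⟨q, hq1, hq2⟩ := exists_rat_btwn hbt
    have hmono := integral_psi_antitone hτ0 hτ1 hsq hq2.le (b := b) (a := (q : ℝ))
    have hneg := H q hq1
    nlinarith [mul_pos hm0 (sub_pos.2 hq2)]

lemma sSup_eq_of_isExpectile (hτ0 : 0 < τ) (hτ1 : τ < 1)
    (hsq : Integrable (fun y => y ^ 2) ν) {a : ℝ} (hE : IsExpectile τ ν a) :
    sSup {b : ℝ | 0 ≤ ∫ y, psiW τ (y - b) ∂ν} = a := by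
  have hm0 : 0 < min τ (1 - τ) := lt_min hτ0 (by linarith)
  have hfoc := foc_of_isExpectile hτ0 hτ1 hsq hE
  refine IsGreatest.csSup_eq ⟨by simp [Set.mem_setOf_eq, hfoc], fun b hb => ?_⟩
  simp only [Set.mem_setOf_eq] at hb
  by_contra hbt
  push_neg at hbt
  have := integral_psi_antitone hτ0 hτ1 hsq hbt.le (b := b)
  rw [hfoc] at this
  nlinarith [mul_pos hm0 (sub_pos.2 hbt)]

end ExpectileSup

section CondDistribComp

open scoped ENNReal

variable {β γ : Type*} [MeasurableSpace β] [MeasurableSpace γ]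

lemma condDistrib_of_condIndep
    {Ω : Type*} [mΩ : MeasurableSpace Ω] [StandardBorelSpace Ω] [Nonempty Ω]
    (P : Measure Ω) [IsProbabilityMeasure P]
    (X : Ω → β) (hX : Measurable X) (Y : Ω → ℝ) (hY : Measurable Y)
    (L : β → γ) (hL : Measurable L)
    (hm : MeasurableSpace.comap (fun ω => L (X ω)) inferInstance ≤ mΩ)
    (hYX : CondIndepFun (MeasurableSpace.comap (fun ω => L (X ω)) inferInstance) hm Y X P) :
    ∀ᵐ ω ∂P, condDistrib Y (fun ω => L (X ω)) P (L (X ω)) = condDistrib Y X P (X ω) := by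
  set T : Ω → γ := fun ω => L (X ω) with hT
  have hTmeas : Measurable T := hL.comp hX
  set κT := condDistrib Y T P with hκT
  set κ : Kernel β ℝ := κT.comap L hL with hκ
  have hcp : P.map (fun ω => (X ω, Y ω)) = (P.map X) ⊗ₘ κ := by
    haveI : IsProbabilityMeasure (P.map (fun ω => (X ω, Y ω))) :=
      Measure.isProbabilityMeasure_map (hX.prodMk hY).aemeasurable
    haveI : IsProbabilityMeasure (P.map X) := Measure.isProbabilityMeasure_map hX.aemeasurable
    refine MeasureTheory.ext_of_generate_finite _ generateFrom_prod.symm isPiSystem_prod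
      ?_ (by simp)
    rintro - ⟨A, hA, S, hS, rfl⟩
    simp only [Set.mem_setOf_eq] at hA hS
    have hAmeas : MeasurableSet (X ⁻¹' A) := hX hA
    rw [Measure.map_apply (hX.prodMk hY) (hA.prod hS), Set.mk_preimage_prod]
    rw [Measure.compProd_apply (hA.prod hS)]
    have hker : ∀ x, κ x (Prod.mk x ⁻¹' A ×ˢ S) = A.indicator (fun x => κ x S) x := by
      intro x
      classical
      rw [Set.mk_preimage_prod_right_eq_if, Set.indicator_apply]

      split_ifs <;> simp
    simp_rw [hker]
    rw [lintegral_indicator hA (fun x => κ x S)]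
    have hκcoe : ∀ x, κ x S = κT (L x) S := fun x => by rw [hκ, Kernel.comap_apply]
    simp_rw [hκcoe]
    rw [setLIntegral_map hA
      (show Measurable (fun a : β => κT (L a) S) from (Kernel.measurable_coe κT hS).comp hL) hX]
    -- now: ∫⁻ ω in X⁻¹' A, κT (L (X ω)) S ∂P = P (X⁻¹' A ∩ Y⁻¹' S)
    set c : Ω → ℝ := P⟦Y ⁻¹' S | MeasurableSpace.comap T inferInstance⟧ with hc
    have h1 : (fun ω => (κT (T ω) S).toReal) =ᵐ[P] c := by
      rw [hc, hκT]
      exact condDistrib_ae_eq_condExp hTmeas hY hS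
    have hIntTo : Integrable (fun ω => (κT (T ω) S).toReal) P :=
      integrable_toReal_condDistrib hTmeas.aemeasurable hS
    have hstep1 : ∫⁻ ω in X ⁻¹' A, κT (T ω) S ∂P =
        ENNReal.ofReal (∫ ω in X ⁻¹' A, (κT (T ω) S).toReal ∂P) := by
      rw [ofReal_integral_eq_lintegral_ofReal hIntTo.integrableOn
        (ae_of_all _ fun ω => ENNReal.toReal_nonneg)]
      refine setLIntegral_congr_fun hAmeas (fun ω _ => ?_)
      rw [ENNReal.ofReal_toReal (measure_ne_top _ _)]
    have hstep2 : ∫ ω in X ⁻¹' A, (κT (T ω) S).toReal ∂P = ∫ ω in X ⁻¹' A, c ω ∂P :=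
      integral_congr_ae (ae_restrict_of_ae h1)
    set I : Ω → ℝ := (X ⁻¹' A).indicator (fun _ => (1:ℝ)) with hI
    have hInt_I : Integrable I P := (integrable_const (1:ℝ)).indicator hAmeas
    have hInt_c : Integrable c P := integrable_condExp
    have hcSM : StronglyMeasurable[MeasurableSpace.comap T inferInstance] c := stronglyMeasurable_condExp
    have hInt_cI : Integrable (c * I) P := by
      refine hInt_c.mono ((hcSM.mono hm).aestronglyMeasurable.mul
        ((stronglyMeasurable_const.indicator hAmeas).aestronglyMeasurable))
        (ae_of_all _ fun ω => ?_)
      simp only [Pi.mul_apply, Real.norm_eq_abs, abs_mul]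
      have hIle : |I ω| ≤ 1 := by
        classical
        rw [hI, Set.indicator_apply]
        split_ifs <;> simp
      calc |c ω| * |I ω| ≤ |c ω| * 1 := by
            exact mul_le_mul_of_nonneg_left hIle (abs_nonneg _)
        _ = |c ω| := mul_one _
    have key : ∫ ω in X ⁻¹' A, c ω ∂P = (P (X ⁻¹' A ∩ Y ⁻¹' S)).toReal := by
      have e1 : ∫ ω in X ⁻¹' A, c ω ∂P = ∫ ω, (c * I) ω ∂P := by
        rw [← integral_indicator hAmeas]
        congr 1
        funext ω
        classical
        rw [Pi.mul_apply, hI, Set.indicator_apply, Set.indicator_apply]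
        split_ifs <;> simp
      have e2 : ∫ ω, (c * I) ω ∂P = ∫ ω, (P[c * I|MeasurableSpace.comap T inferInstance]) ω ∂P := (integral_condExp hm).symm
      have e3 : P[c * I|MeasurableSpace.comap T inferInstance] =ᵐ[P] c * P[I|MeasurableSpace.comap T inferInstance] :=
        condExp_mul_of_stronglyMeasurable_left hcSM hInt_cI hInt_I
      have e4 : c * P[I|MeasurableSpace.comap T inferInstance] =ᵐ[P] P⟦Y ⁻¹' S ∩ X ⁻¹' A|MeasurableSpace.comap T inferInstance⟧ := by
        have h5 := (condIndepFun_iff_condExp_inter_preimage_eq_mul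
          (m' := MeasurableSpace.comap T inferInstance) (hm' := hm) hY hX).1 hYX S A hS hA
        exact (Filter.EventuallyEq.symm h5).trans (by rfl)
      have e5 : ∫ ω, (P⟦Y ⁻¹' S ∩ X ⁻¹' A|MeasurableSpace.comap T inferInstance⟧) ω ∂P = (P (Y ⁻¹' S ∩ X ⁻¹' A)).toReal := by
        rw [integral_condExp hm, integral_indicator_const _ ((hY hS).inter hAmeas),
          smul_eq_mul, mul_one]; rfl
      rw [e1, e2, integral_congr_ae (e3.trans e4), e5, Set.inter_comm]
    rw [hstep1, hstep2, key, ENNReal.ofReal_toReal (measure_ne_top _ _)]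
  have hae := condDistrib_ae_eq_of_measure_eq_compProd_of_measurable hX hY hcp
  have hae2 := ae_of_ae_map hX.aemeasurable hae
  filter_upwards [hae2] with ω hω
  rw [hω, hκ, Kernel.comap_apply]

end CondDistribComp

/-- If `Y ⫫ X | BᵀX`, then the conditional expectile `f_τ(X)` is almost surely a Borel
function `g` of `BᵀX`, where `g(w)` is the unique minimizer of
`a ↦ ∫ φ_τ(y − a) κ_B(w)(dy)` and `κ_B` is a regular conditional distribution of `Y`
given `BᵀX`. -/
theorem statement1
    {Ω : Type*} [mΩ : MeasurableSpace Ω] [StandardBorelSpace Ω] [Nonempty Ω]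
    (P : Measure Ω) [IsProbabilityMeasure P]
    {p d : ℕ}
    (X : Ω → Fin p → ℝ) (hXmeas : Measurable X) (hX2 : MemLp X 2 P)
    (Y : Ω → ℝ) (hYmeas : Measurable Y) (hY2 : MemLp Y 2 P)
    (B : Matrix (Fin p) (Fin d) ℝ) (hBrank : B.rank = d)
    (hm : MeasurableSpace.comap (fun ω => Bᵀ.mulVec (X ω)) inferInstance ≤ mΩ)
    (hYX : CondIndepFun (MeasurableSpace.comap (fun ω => Bᵀ.mulVec (X ω)) inferInstance) hm
      Y X P)
    (τ : ℝ) (hτ0 : 0 < τ) (hτ1 : τ < 1)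
    (f : (Fin p → ℝ) → ℝ) (hfmeas : Measurable f)
    (hexp : ∀ᵐ x ∂(P.map X), IsExpectile τ (condDistrib Y X P x) (f x)) :
    ∃ g : (Fin d → ℝ) → ℝ, Measurable g ∧
      (∀ᵐ ω ∂P, f (X ω) = g (Bᵀ.mulVec (X ω))) ∧
      (∀ᵐ w ∂(P.map fun ω => Bᵀ.mulVec (X ω)),
        IsExpectile τ (condDistrib Y (fun ω => Bᵀ.mulVec (X ω)) P w) (g w)) := by
  classical
  have hLmeas : Measurable (fun x : Fin p → ℝ => Bᵀ.mulVec x) := by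
    apply measurable_pi_lambda
    intro i
    simp only [Matrix.mulVec, dotProduct]
    exact Finset.measurable_sum _ (fun j _ => (measurable_pi_apply j).const_mul _)
  set T : Ω → Fin d → ℝ := fun ω => Bᵀ.mulVec (X ω) with hTdef
  have hTmeas : Measurable T := hLmeas.comp hXmeas
  set κT := condDistrib Y T P with hκT
  haveI : IsMarkovKernel κT := by rw [hκT]; infer_instance
  -- Step A: the conditional distributions agree a.s.
  have hstepA : ∀ᵐ ω ∂P, κT (T ω) = condDistrib Y X P (X ω) :=
    condDistrib_of_condIndep P X hXmeas Y hYmeas _ hLmeas hm hYX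
  have hexp' : ∀ᵐ ω ∂P, IsExpectile τ (condDistrib Y X P (X ω)) (f (X ω)) :=
    ae_of_ae_map hXmeas.aemeasurable hexp
  have hexpT : ∀ᵐ ω ∂P, IsExpectile τ (κT (T ω)) (f (X ω)) := by
    filter_upwards [hstepA, hexp'] with ω h1 h2
    rw [h1]; exact h2
  -- measurable structure
  have hGmeas_joint : Measurable (fun q : (Fin d → ℝ) × ℝ => ∫ y, psiW τ (y - q.2) ∂(κT q.1)) := by
    have hsm : StronglyMeasurable (fun q : ((Fin d → ℝ) × ℝ) × ℝ => psiW τ (q.2 - q.1.2)) :=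
      ((measurable_psiW τ).comp (measurable_snd.sub measurable_fst.snd)).stronglyMeasurable
    have h0 := MeasureTheory.StronglyMeasurable.integral_kernel_prod_right'
      (κ := κT.comap Prod.fst measurable_fst) hsm
    have h1 := h0.measurable
    simpa [Kernel.comap_apply] using h1
  set V : (Fin d → ℝ) → ℝ≥0∞ := fun w => ∫⁻ y, ENNReal.ofReal (y ^ 2) ∂(κT w) with hVdef
  have hVmeas : Measurable V :=
    Measurable.lintegral_kernel (ENNReal.measurable_ofReal.comp (measurable_id.pow_const 2))
  have hViff : ∀ w, (V w < ⊤ ↔ Integrable (fun y : ℝ => y ^ 2) (κT w)) := by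
    intro w
    have hae : 0 ≤ᵐ[κT w] fun y : ℝ => y ^ 2 := ae_of_all _ fun y => sq_nonneg y
    constructor
    · intro h
      exact ⟨(measurable_id.pow_const 2).aestronglyMeasurable,
        (hasFiniteIntegral_iff_ofReal hae).2 h⟩
    · intro h
      exact (hasFiniteIntegral_iff_ofReal hae).1 h.hasFiniteIntegral
  set g : (Fin d → ℝ) → ℝ :=
    fun w => if V w < ⊤ then sSup {b | 0 ≤ ∫ y, psiW τ (y - b) ∂(κT w)} else 0 with hgdef
  have hGw : ∀ (b : ℝ), Measurable (fun w => ∫ y, psiW τ (y - b) ∂(κT w)) := fun b =>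
    hGmeas_joint.comp (measurable_id.prodMk measurable_const)
  -- measurability of g
  have hgmeas : Measurable g := by
    apply measurable_of_Iic
    intro t
    have hset : g ⁻¹' Set.Iic t =
        ({w | V w < ⊤} ∩ ⋂ (q : ℚ), ⋂ (_ : t < (q : ℝ)),
          {w | ∫ y, psiW τ (y - (q : ℝ)) ∂(κT w) < 0})
        ∪ ({w | V w < ⊤}ᶜ ∩ (if (0:ℝ) ≤ t then Set.univ else ∅)) := by
      ext w
      by_cases hw : V w < ⊤
      · haveI : IsProbabilityMeasure (κT w) := IsMarkovKernel.isProbabilityMeasure w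
        have hsq := (hViff w).1 hw
        have hchar := sSup_char (ν := κT w) hτ0 hτ1 hsq t
        simp only [Set.mem_preimage, Set.mem_Iic, Set.mem_union, Set.mem_inter_iff,
          Set.mem_setOf_eq, Set.mem_iInter, Set.mem_compl_iff, hw, not_true_eq_false,
          false_and, or_false, true_and, hgdef, if_pos hw]
        exact hchar
      · by_cases ht : (0:ℝ) ≤ t <;>
          simp [hgdef, hw, ht]
    rw [hset]
    apply MeasurableSet.union
    · exact (measurableSet_lt hVmeas measurable_const).inter
        (MeasurableSet.iInter fun q => MeasurableSet.iInter fun _ =>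
          measurableSet_lt (hGw (q : ℝ)) measurable_const)
    · refine ((measurableSet_lt hVmeas measurable_const).compl).inter ?_
      split_ifs
      exacts [MeasurableSet.univ, MeasurableSet.empty]
  -- bullet 2
  have hbul2 : ∀ᵐ ω ∂P, f (X ω) = g (T ω) := by
    filter_upwards [hexpT] with ω hω
    haveI : IsProbabilityMeasure (κT (T ω)) := IsMarkovKernel.isProbabilityMeasure (T ω)
    have hsq : Integrable (fun y : ℝ => y ^ 2) (κT (T ω)) :=
      sq_integrable_of_isExpectile hτ0 hτ1 hω
    have hVw : V (T ω) < ⊤ := (hViff _).2 hsq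
    have hs := sSup_eq_of_isExpectile hτ0 hτ1 hsq hω
    simp only [hgdef, if_pos hVw]
    exact hs.symm
  -- bullet 3
  set W := {w | V w < ⊤} ∩ {w | ∫ y, psiW τ (y - g w) ∂(κT w) = 0} with hWdef
  have hWmeas : MeasurableSet W := by
    refine (measurableSet_lt hVmeas measurable_const).inter ?_
    have hGg : Measurable (fun w => ∫ y, psiW τ (y - g w) ∂(κT w)) :=
      hGmeas_joint.comp (measurable_id.prodMk hgmeas)
    exact measurableSet_eq_fun hGg measurable_const
  have hWae : ∀ᵐ ω ∂P, T ω ∈ W := by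
    filter_upwards [hexpT, hbul2] with ω hω hfg
    haveI : IsProbabilityMeasure (κT (T ω)) := IsMarkovKernel.isProbabilityMeasure (T ω)
    have hsq : Integrable (fun y : ℝ => y ^ 2) (κT (T ω)) :=
      sq_integrable_of_isExpectile hτ0 hτ1 hω
    refine ⟨(hViff _).2 hsq, ?_⟩
    simp only [Set.mem_setOf_eq, ← hfg]
    exact foc_of_isExpectile hτ0 hτ1 hsq hω
  have hbul3 : ∀ᵐ w ∂(P.map T), IsExpectile τ (κT w) (g w) := by
    have hWael : ∀ᵐ w ∂(P.map T), w ∈ W := by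
      rw [ae_iff, Measure.map_apply hTmeas]
      · have : {ω | T ω ∉ W} = T ⁻¹' {w | w ∉ W} := rfl
        rw [ae_iff] at hWae
        exact hWae
      · exact hWmeas.compl
    filter_upwards [hWael] with w hw
    haveI : IsProbabilityMeasure (κT w) := IsMarkovKernel.isProbabilityMeasure w
    exact isExpectile_of_foc hτ0 hτ1 ((hViff w).1 hw.1) hw.2
  exact ⟨g, hgmeas, hbul2, hbul3⟩
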